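/- The alternating group A₄ is generated by α = (1 2)(3 4) and β = (1 2 3), and for every n ≥ 2, rank((A₄)^n) = n. -/

import Mathlib

open Subgroup

/-- Minimal length of a word over `X` (positive letters only) representing `g`. -/
noncomputable def wLen {G : Type*} [Group G] (X : Set G) (g : G) : ℕ :=
  sInf {n | ∃ l : List G, (∀ x ∈ l, x ∈ X) ∧ l.length = n ∧ l.prod = g}

/-- Minimal length of a word over `X ∪ X⁻¹` representing `g`. -/
noncomputable def sLen {G : Type*} [Group G] (X : Set G) (g : G) : ℕ :=
  sInf {n | ∃ l : List G, (∀ x ∈ l, x ∈ X ∨ x⁻¹ ∈ X) ∧ l.length = n ∧ l.prod = g}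

/-- Diameter of `G` with respect to `X` (positive words). -/
noncomputable def diamW (G : Type*) [Group G] (X : Set G) : ℕ :=
  sSup (Set.range (wLen X))

/-- Symmetric diameter of `G` with respect to `X`. -/
noncomputable def diamS (G : Type*) [Group G] (X : Set G) : ℕ :=
  sSup (Set.range (sLen X))

/-- Maximum diameter over all generating sets. -/
noncomputable def DW (G : Type*) [Group G] : ℕ :=
  sSup {d | ∃ X : Set G, Subgroup.closure X = ⊤ ∧ d = diamW G X}

/-- Maximum symmetric diameter over all generating sets. -/
noncomputable def DS (G : Type*) [Group G] : ℕ :=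
  sSup {d | ∃ X : Set G, Subgroup.closure X = ⊤ ∧ d = diamS G X}

/-- Minimal size of a generating set of `G`. -/
noncomputable def rk (G : Type*) [Group G] : ℕ :=
  sInf {n | ∃ S : Finset G, S.card = n ∧ Subgroup.closure (S : Set G) = ⊤}


namespace Stmt11Aux

abbrev A4 := alternatingGroup (Fin 4)

def aa : A4 := ⟨Equiv.swap 0 1 * Equiv.swap 2 3, by rw [Equiv.Perm.mem_alternatingGroup]; decide⟩
def bb : A4 := ⟨Equiv.swap 0 1 * Equiv.swap 1 2, by rw [Equiv.Perm.mem_alternatingGroup]; decide⟩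

theorem closure_ab : Subgroup.closure {aa, bb} = ⊤ := by
  have ha : aa ∈ Subgroup.closure {aa, bb} := subset_closure (by simp)
  have hb : bb ∈ Subgroup.closure {aa, bb} := subset_closure (by simp)
  set H := Subgroup.closure {aa, bb}
  have hdvd : Nat.card H ∣ 12 := by
    have := Subgroup.card_subgroup_dvd_card H
    rwa [show Nat.card A4 = 12 by rw [Nat.card_eq_fintype_card]; decide] at this
  have h7 : 7 ≤ Nat.card H := by
    have hsub : (({1, aa, bb, bb^2, aa*bb, bb*aa, aa*bb^2} : Finset A4) : Set A4) ⊆ (H : Set A4) := by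
      intro x hx
      simp only [Finset.coe_insert, Set.mem_insert_iff, Finset.coe_singleton,
        Set.mem_singleton_iff] at hx
      rcases hx with rfl|rfl|rfl|rfl|rfl|rfl|rfl
      · exact one_mem H
      · exact ha
      · exact hb
      · exact mul_mem hb hb
      · exact mul_mem ha hb
      · exact mul_mem hb ha
      · exact mul_mem ha (mul_mem hb hb)
    have := Set.ncard_le_ncard hsub (Set.toFinite _)
    rw [Set.ncard_coe_finset] at this
    calc 7 = ({1, aa, bb, bb^2, aa*bb, bb*aa, aa*bb^2} : Finset A4).card := by decide
    _ ≤ (↑H : Set A4).ncard := this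
    _ = Nat.card H := (Nat.card_coe_set_eq _).symm
  have h12 : Nat.card H = 12 := by
    obtain ⟨d, hd⟩ : ∃ d, Nat.card H = d := ⟨_, rfl⟩
    rw [hd] at hdvd h7 ⊢
    have hle : d ≤ 12 := Nat.le_of_dvd (by norm_num) hdvd
    interval_cases d <;> omega
  exact Subgroup.eq_top_of_card_eq H (by rw [h12, Nat.card_eq_fintype_card]; decide)

def f0 (x : A4) : ZMod 3 :=
  match ((x : Equiv.Perm (Fin 4)) 0 + (x : Equiv.Perm (Fin 4)) 1 : Fin 4) with
  | 1 => 0 | 3 => 1 | _ => 2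

theorem f0_mul : ∀ x y : A4, f0 (x * y) = f0 x + f0 y := by decide

def fhom : A4 →* Multiplicative (ZMod 3) :=
  MonoidHom.mk' (fun x => Multiplicative.ofAdd (f0 x)) (fun x y => by
    simp [f0_mul])

theorem fhom_surj : Function.Surjective fhom := by
  intro z
  have : ∃ x : A4, f0 x = z.toAdd := by
    revert z; decide
  obtain ⟨x, hx⟩ := this
  exact ⟨x, by simp [fhom, hx]⟩

theorem lower_bound (n : ℕ) (S : Finset (Fin n → A4))
    (h : Subgroup.closure (S : Set (Fin n → A4)) = ⊤) : n ≤ S.card := by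
  haveI : Fact (Nat.Prime 3) := ⟨by norm_num⟩
  set F : (Fin n → A4) →* Multiplicative (Fin n → ZMod 3) :=
    MonoidHom.mk' (fun x => Multiplicative.ofAdd (fun i => f0 (x i))) (fun x y => by
      apply Multiplicative.toAdd.injective
      funext i
      exact f0_mul (x i) (y i)) with hF
  have hFsurj : Function.Surjective F := by
    intro v
    choose p hp using (fun i => fhom_surj (Multiplicative.ofAdd (v.toAdd i)))
    refine ⟨p, ?_⟩
    apply Multiplicative.toAdd.injective
    funext i
    have := congrArg Multiplicative.toAdd (hp i)
    simpa [fhom, hF] using this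
  have hmap : Subgroup.closure (F '' (S : Set _)) = ⊤ := by
    rw [← MonoidHom.map_closure, h]
    exact Subgroup.map_top_of_surjective F hFsurj
  set T : Finset (Fin n → ZMod 3) := S.image (fun x i => f0 (x i)) with hT
  have hTim : (T : Set (Fin n → ZMod 3)) = Multiplicative.toAdd '' (F '' (S : Set _)) := by
    rw [hT, Finset.coe_image, ← Set.image_comp]
    rfl
  have hspan : Submodule.span (ZMod 3) (T : Set (Fin n → ZMod 3)) = ⊤ := by
    rw [eq_top_iff]
    intro v _
    have hv : Multiplicative.ofAdd v ∈ Subgroup.closure (F '' (S : Set _)) := by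
      rw [hmap]; trivial
    have key : ∀ x ∈ Subgroup.closure (F '' (S : Set _)),
        Multiplicative.toAdd x ∈ Submodule.span (ZMod 3) (T : Set (Fin n → ZMod 3)) := by
      intro x hx
      induction hx using Subgroup.closure_induction with
      | mem y hy => exact Submodule.subset_span (by rw [hTim]; exact ⟨y, hy, rfl⟩)
      | one => exact Submodule.zero_mem _
      | mul a b _ _ ha hb => exact Submodule.add_mem _ ha hb
      | inv a _ ha => exact Submodule.neg_mem _ ha
    exact key _ hv
  have hrank : n ≤ T.card := by
    have := finrank_span_finset_le_card (R := ZMod 3) T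
    rw [Set.finrank, hspan, finrank_top, Module.finrank_pi] at this
    simpa using this
  exact hrank.trans (Finset.card_image_le)

theorem upper_bound (n : ℕ) (hn : 2 ≤ n) :
    ∃ S : Finset (Fin n → A4), S.card = n ∧ Subgroup.closure (S : Set (Fin n → A4)) = ⊤ := by
  haveI : NeZero n := ⟨by omega⟩
  set ms : (i : Fin n) → A4 → (Fin n → A4) := fun i x => Pi.mulSingle i x with hms
  set g : Fin n → (Fin n → A4) :=
    fun i j => if j = i then aa else if j = i + 1 then bb else 1 with hg
  have hone : (1 : Fin n) ≠ 0 := by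
    intro h
    have := congrArg Fin.val h
    rw [Fin.val_one' n, Nat.mod_eq_of_lt (show 1 < n by omega)] at this
    simp at this
  have hne : ∀ i : Fin n, i + 1 ≠ i := fun i h => hone (by
    have : i + 1 = i + 0 := by rw [add_zero]; exact h
    exact add_left_cancel this)
  set H := Subgroup.closure (Set.range g) with hH
  have hgmem : ∀ i, g i ∈ H := fun i => subset_closure ⟨i, rfl⟩
  have hsingle_a : ∀ i, ms i aa ∈ H := by
    intro i
    have h3 : (g i) ^ 3 = ms i aa := by
      funext j
      simp only [Pi.pow_apply, hms, hg]
      by_cases h1 : j = i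
      · subst h1
        rw [Pi.mulSingle_eq_same, if_pos rfl]
        decide
      · rw [Pi.mulSingle_eq_of_ne h1, if_neg h1]
        by_cases h2 : j = i + 1
        · rw [if_pos h2]; decide
        · rw [if_neg h2]; exact one_pow 3
    exact h3 ▸ pow_mem (hgmem i) 3
  have hsingle_b : ∀ i : Fin n, ms i bb ∈ H := by
    have key : ∀ i : Fin n, ms (i + 1) bb ∈ H := by
      intro i
      have heq : (ms i aa)⁻¹ * g i = ms (i + 1) bb := by
        funext j
        simp only [Pi.mul_apply, Pi.inv_apply, hms, hg]
        by_cases h1 : j = i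
        · subst h1
          rw [Pi.mulSingle_eq_same, Pi.mulSingle_eq_of_ne (Ne.symm (hne j)), if_pos rfl]
          exact inv_mul_cancel aa
        · rw [Pi.mulSingle_eq_of_ne h1, if_neg h1]
          by_cases h2 : j = i + 1
          · subst h2
            rw [Pi.mulSingle_eq_same, if_pos rfl, inv_one, one_mul]
          · rw [Pi.mulSingle_eq_of_ne h2, if_neg h2, inv_one, one_mul]
      exact heq ▸ mul_mem (inv_mem (hsingle_a i)) (hgmem i)
    intro k
    have := key (k - 1)
    rwa [sub_add_cancel] at this
  have hsingle : ∀ (i : Fin n) (y : A4), ms i y ∈ H := by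
    intro i
    have hle : Subgroup.closure {aa, bb} ≤
        H.comap (MonoidHom.mulSingle (fun _ : Fin n => A4) i) := by
      rw [Subgroup.closure_le]
      intro x hx
      rcases hx with rfl | rfl
      · exact hsingle_a i
      · exact hsingle_b i
    intro y
    have hy : y ∈ Subgroup.closure {aa, bb} := by rw [closure_ab]; trivial
    exact hle hy
  have htop : H = ⊤ := by
    rw [eq_top_iff]
    intro x _
    rw [← Finset.noncommProd_mulSingle x]
    exact Subgroup.noncommProd_mem H _ (fun i _ => hsingle i (x i))
  have hginj : Function.Injective g := by
    intro i i' h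
    by_contra hii
    have h2 := congrFun h i
    simp only [hg, if_pos rfl, if_neg hii] at h2
    by_cases h3 : i = i' + 1
    · rw [if_pos h3] at h2; exact absurd h2 (by decide)
    · rw [if_neg h3] at h2; exact absurd h2 (by decide)
  refine ⟨Finset.image g Finset.univ, ?_, ?_⟩
  · rw [Finset.card_image_of_injective _ hginj, Finset.card_univ, Fintype.card_fin]
  · rw [Finset.coe_image, Finset.coe_univ, Set.image_univ, ← hH, htop]

end Stmt11Aux

open Stmt11Aux in
theorem stmt11 :
    Subgroup.closure
        {(⟨Equiv.swap 0 1 * Equiv.swap 2 3,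
            by rw [Equiv.Perm.mem_alternatingGroup]; decide⟩ : alternatingGroup (Fin 4)),
          ⟨Equiv.swap 0 1 * Equiv.swap 1 2,
            by rw [Equiv.Perm.mem_alternatingGroup]; decide⟩} = ⊤ ∧
      ∀ n : ℕ, 2 ≤ n → rk (Fin n → alternatingGroup (Fin 4)) = n := by
  constructor
  · exact closure_ab
  · intro n hn
    obtain ⟨S, hcard, hcl⟩ := upper_bound n hn
    refine le_antisymm (Nat.sInf_le ⟨S, hcard, hcl⟩) ?_
    refine le_csInf ⟨n, S, hcard, hcl⟩ ?_
    rintro m ⟨T, hc, hT⟩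
    exact hc ▸ lower_bound n T hT
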